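/- Let α be the real cube root of 2 and β a real root of X² + α²X + (1 - α²). Then β has degree 6 over ℚ; in particular β ∉ ℚ(α). -/

import Mathlib

-- integer descent
lemma no_int_sol : ∀ n : ℕ, ∀ A B C N : ℤ, N.natAbs = n → N ≠ 0 →
    A*B + C^2 = N^2 → B^2 + 2*A*C = 4*N^2 → A^2 + 4*B*C = -4*N^2 → False := by
  intro n
  induction n using Nat.strong_induction_on with
  | _ n ih =>
    intro A B C N hn hN0 e1 e2 e3
    -- A even
    have hA : (2 : ℤ) ∣ A := by
      have h4 : (2:ℤ) ∣ A^2 := ⟨-2*N^2 - 2*B*C, by linarith⟩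
      exact Int.Prime.dvd_pow' Nat.prime_two h4
    obtain ⟨A', rfl⟩ := hA
    have hB : (2 : ℤ) ∣ B := by
      have h4 : (2:ℤ) ∣ B^2 := ⟨2*N^2 - 2*A'*C, by linarith⟩
      exact Int.Prime.dvd_pow' Nat.prime_two h4
    obtain ⟨B', rfl⟩ := hB
    have e1' : 4*(A'*B') + C^2 = N^2 := by linarith
    have e2' : B'^2 + A'*C = N^2 := by nlinarith
    have e3' : A'^2 + 2*(B'*C) = -N^2 := by nlinarith
    -- mod 4: N even
    have key : ∀ a b c m : ZMod 4, b^2 + a*c = m^2 → a^2 + 2*(b*c) = -m^2 → m^2 = 0 := by decide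
    have hc2 : ((B':ZMod 4))^2 + (A':ZMod 4)*(C:ZMod 4) = ((N:ZMod 4))^2 := by
      have := congrArg (fun t : ℤ => (t : ZMod 4)) e2'
      push_cast at this; exact this
    have hc3 : ((A':ZMod 4))^2 + 2*((B':ZMod 4)*(C:ZMod 4)) = -((N:ZMod 4))^2 := by
      have := congrArg (fun t : ℤ => (t : ZMod 4)) e3'
      push_cast at this; exact this
    have hm : ((N:ZMod 4))^2 = 0 := key _ _ _ _ hc2 hc3
    have h4N : (4:ℤ) ∣ N^2 := by
      have : ((N^2 : ℤ) : ZMod 4) = 0 := by push_cast; exact hm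
      exact (ZMod.intCast_zmod_eq_zero_iff_dvd _ 4).mp this
    have hN : (2:ℤ) ∣ N := Int.Prime.dvd_pow' Nat.prime_two (dvd_trans ⟨2, by norm_num⟩ h4N)
    obtain ⟨N₀, rfl⟩ := hN
    have hC : (2:ℤ) ∣ C := by
      have : (2:ℤ) ∣ C^2 := ⟨2*N₀^2 - 2*(A'*B'), by nlinarith⟩
      exact Int.Prime.dvd_pow' Nat.prime_two this
    obtain ⟨C₀, rfl⟩ := hC
    have f1 : A'*B' + C₀^2 = N₀^2 := by nlinarith
    have f2 : B'^2 + 2*A'*C₀ = 4*N₀^2 := by nlinarith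
    have f3 : A'^2 + 4*B'*C₀ = -4*N₀^2 := by nlinarith
    have hN₀0 : N₀ ≠ 0 := by rintro rfl; simp at hN0
    have hlt : N₀.natAbs < n := by
      subst hn
      have h2 : (2*N₀).natAbs = 2 * N₀.natAbs := by simp [Int.natAbs_mul]
      have h3 : N₀.natAbs ≠ 0 := Int.natAbs_ne_zero.mpr hN₀0
      omega
    exact ih _ hlt A' B' C₀ N₀ rfl hN₀0 f1 f2 f3

lemma no_rat_sol (x y z : ℚ) (h1 : x*y + z^2 = 1) (h2 : y^2 + 2*x*z = 4)
    (h3 : x^2 + 4*y*z = -4) : False := by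
  set D : ℤ := (x.den : ℤ) * y.den * z.den with hD
  set A : ℤ := x.num * y.den * z.den with hA
  set B : ℤ := y.num * x.den * z.den with hB
  set C : ℤ := z.num * x.den * y.den with hC
  have hD0 : D ≠ 0 := by
    rw [hD]; positivity
  have hx : (A : ℚ) = x * D := by
    have hmd := Rat.mul_den_eq_num x
    rw [hA, hD]; push_cast
    linear_combination (-((y.den:ℚ)*z.den)) * hmd
  have hy : (B : ℚ) = y * D := by
    have hmd := Rat.mul_den_eq_num y
    rw [hB, hD]; push_cast
    linear_combination (-((x.den:ℚ)*z.den)) * hmd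
  have hz : (C : ℚ) = z * D := by
    have hmd := Rat.mul_den_eq_num z
    rw [hC, hD]; push_cast
    linear_combination (-((x.den:ℚ)*y.den)) * hmd
  have e1 : A*B + C^2 = D^2 := by
    have : ((A*B + C^2 : ℤ) : ℚ) = ((D^2 : ℤ) : ℚ) := by
      push_cast
      rw [hx, hy, hz]; linear_combination ((D:ℚ))^2 * h1
    exact_mod_cast this
  have e2 : B^2 + 2*A*C = 4*D^2 := by
    have : ((B^2 + 2*A*C : ℤ) : ℚ) = ((4*D^2 : ℤ) : ℚ) := by
      push_cast
      rw [hx, hy, hz]; linear_combination ((D:ℚ))^2 * h2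
    exact_mod_cast this
  have e3 : A^2 + 4*B*C = -4*D^2 := by
    have : ((A^2 + 4*B*C : ℤ) : ℚ) = ((-4*D^2 : ℤ) : ℚ) := by
      push_cast
      rw [hx, hy, hz]; linear_combination ((D:ℚ))^2 * h3
    exact_mod_cast this
  exact no_int_sol D.natAbs A B C D rfl hD0 e1 e2 e3

open Polynomial IntermediateField Module

lemma no_rat_cbrt : ∀ b : ℚ, b ^ 3 ≠ 2 := by
  intro b hb
  have h1 : b.num ^ 3 = 2 := by
    have := congrArg Rat.num hb
    simpa using this
  have hd : b.num ∣ 2 := ⟨b.num^2, by linear_combination -h1⟩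
  have hub := Int.le_of_dvd (by norm_num) hd
  have hlb := Int.le_of_dvd (by norm_num) ((neg_dvd).mpr hd)
  have hlb' : -2 ≤ b.num := by linarith
  interval_cases h : b.num <;> norm_num at h1

/-- β (a real root of X² + α²X + (1-α²), α = ∛2) has degree 6
over ℚ; in particular β ∉ ℚ(α). -/
theorem beta_degree_six (α β : ℝ) (hα : α ^ 3 = 2)
    (hβ : β ^ 2 + α ^ 2 * β + (1 - α ^ 2) = 0) :
    (minpoly ℚ β).natDegree = 6 ∧
      β ∉ IntermediateField.adjoin ℚ ({α} : Set ℝ) := by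
  have hmon : ((X:ℚ[X])^3 - C 2).Monic := monic_X_pow_sub_C 2 (by norm_num)
  have hα3 : aeval α ((X:ℚ[X])^3 - C 2) = 0 := by simp [hα]
  have hirr : Irreducible ((X:ℚ[X])^3 - C 2) :=
    X_pow_sub_C_irreducible_of_prime (by norm_num) no_rat_cbrt
  have hintα : IsIntegral ℚ α := ⟨(X:ℚ[X])^3 - C 2, hmon, hα3⟩
  have hminα : minpoly ℚ α = (X:ℚ[X])^3 - C 2 :=
    (minpoly.eq_of_irreducible_of_monic hirr hα3 hmon).symm
  -- linear independence of 1, α, α²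
  have hli : ∀ e₀ e₁ e₂ : ℚ, (e₀:ℝ) + e₁*α + e₂*α^2 = 0 → e₀ = 0 ∧ e₁ = 0 ∧ e₂ = 0 := by
    intro e₀ e₁ e₂ h
    by_contra hne
    set q : ℚ[X] := C e₀ + C e₁ * X + C e₂ * X^2 with hq
    have hc0 : q.coeff 0 = e₀ := by simp [hq, coeff_one]
    have hc1 : q.coeff 1 = e₁ := by simp [hq, coeff_one]
    have hc2 : q.coeff 2 = e₂ := by simp [hq, coeff_one]
    have hq0 : q ≠ 0 := by
      intro h0
      exact hne ⟨by rw [← hc0, h0, coeff_zero], by rw [← hc1, h0, coeff_zero],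
        by rw [← hc2, h0, coeff_zero]⟩
    have haq : aeval α q = 0 := by
      simp only [hq, map_add, map_mul, aeval_C, aeval_X, map_pow]
      push_cast
      convert h using 2 <;> push_cast [eq_ratCast] <;> ring
    have hdvd := minpoly.dvd ℚ α haq
    have hd1 : (minpoly ℚ α).degree ≤ q.degree := degree_le_of_dvd hdvd hq0
    have hd2 : q.degree ≤ 2 := by rw [hq]; compute_degree
    rw [hminα, degree_X_pow_sub_C (by norm_num) (2:ℚ)] at hd1
    have := le_trans hd1 hd2
    norm_num at this
  -- β ∉ ℚ(α)
  have hnot : β ∉ IntermediateField.adjoin ℚ ({α} : Set ℝ) := by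
    intro hmem
    have hmem2 : β ∈ (IntermediateField.adjoin ℚ ({α} : Set ℝ)).toSubalgebra := hmem
    rw [adjoin_simple_toSubalgebra_of_isAlgebraic hintα.isAlgebraic,
      Algebra.adjoin_singleton_eq_range_aeval] at hmem2
    obtain ⟨f, hf⟩ := hmem2
    set r := f %ₘ ((X:ℚ[X])^3 - C 2) with hr
    have hβr : aeval α r = β := by
      conv_rhs => rw [← hf]
      conv_rhs => rw [← modByMonic_add_div f ((X:ℚ[X])^3 - C 2)]
      simp [hα3, ← hr]
    have hdeg : r.natDegree < 3 := by
      rcases eq_or_ne r 0 with h0 | h0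
      · simp [h0]
      · have := degree_modByMonic_lt f hmon
        rw [degree_X_pow_sub_C (by norm_num) (2:ℚ)] at this
        exact_mod_cast (natDegree_lt_iff_degree_lt h0).mpr (by exact_mod_cast this)
    set a := r.coeff 0 with ha
    set b := r.coeff 1 with hb
    set c := r.coeff 2 with hc
    have hrep : β = (a:ℝ) + b*α + c*α^2 := by
      rw [← hβr, aeval_eq_sum_range' hdeg]
      rw [Finset.sum_range_succ, Finset.sum_range_succ, Finset.sum_range_succ]
      push_cast [Rat.smul_def]
      ring
    have hβ' : ((a:ℝ)+b*α+c*α^2)^2 + α^2*((a:ℝ)+b*α+c*α^2) + (1 - α^2) = 0 := by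
      rw [← hrep]; exact hβ
    have key := hli (a^2+4*b*c+2*b+1) (2*(a*b+c^2+c)) (b^2+2*a*c+a-1) (by
      push_cast
      linear_combination hβ' - (2*(b:ℝ)*c + b + ((c:ℝ)^2 + c)*α) * hα)
    obtain ⟨h1, h2, h3⟩ := key
    exact no_rat_sol (2*a) (2*b) (2*c+1) (by linear_combination 2*h2)
      (by linear_combination 4*h3) (by linear_combination 4*h1)
  -- degree part
  set P : ℚ[X] := X^6 + C 3 * X^4 + C 4 * X^3 - C 9 * X^2 + C 12 * X - C 3 with hP
  have hPmon : P.Monic := by rw [hP]; monicity!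
  have hPdeg : P.natDegree = 6 := by rw [hP]; compute_degree!
  have hPβ : aeval β P = 0 := by
    simp only [hP, map_add, map_sub, map_mul, map_pow, aeval_C, aeval_X, map_ofNat]
    push_cast
    linear_combination (3*α^4*(1-β)^2 + 3*α^2*(1-β)*(β^2+α^2*β+(1-α^2))
      + (β^2+α^2*β+(1-α^2))^2) * hβ + ((α^3+2)*(1-β)^3) * hα
  have hintβ : IsIntegral ℚ β := ⟨P, hPmon, hPβ⟩
  haveI hFDβ : FiniteDimensional ℚ ℚ⟮β⟯ := adjoin.finiteDimensional hintβ
  have hfinβ : finrank ℚ ℚ⟮β⟯ = (minpoly ℚ β).natDegree := adjoin.finrank hintβ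
  have hfinα : finrank ℚ ℚ⟮α⟯ = 3 := by
    rw [adjoin.finrank hintα, hminα, natDegree_X_pow_sub_C]
  -- α ∈ ℚ(β)
  have hβ1 : (1:ℝ) - β ≠ 0 := by
    intro h
    have : β = 1 := by linarith
    rw [this] at hβ; norm_num at hβ
  have hkey : α * ((1-β)^2 * 2) = (β^2+1)^2 := by
    linear_combination (-(2*α^2*(1-β)) - (β^2+α^2*β+(1-α^2)))*hβ - α*(1-β)^2*hα
  have hαval : α = ((β^2+1)/(1-β))^2 / 2 := by
    rw [div_pow, div_div, eq_div_iff (by positivity)]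
    linear_combination hkey
  have hαmem : α ∈ ℚ⟮β⟯ := by
    rw [hαval]
    have hbm : β ∈ ℚ⟮β⟯ := mem_adjoin_simple_self ℚ β
    have h2m : (2:ℝ) ∈ ℚ⟮β⟯ := by
      have := ℚ⟮β⟯.algebraMap_mem (2:ℚ); simpa using this
    exact div_mem (pow_mem (div_mem (add_mem (pow_mem hbm 2) (one_mem _))
      (sub_mem (one_mem _) hbm)) 2) h2m
  have hle : ℚ⟮α⟯ ≤ ℚ⟮β⟯ := adjoin_simple_le_iff.mpr hαmem
  have hdvd3 : 3 ∣ (minpoly ℚ β).natDegree := by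
    rw [← hfinβ, ← hfinα]
    exact ⟨_, (finrank_bot_mul_relfinrank hle).symm⟩
  have hle6 : (minpoly ℚ β).natDegree ≤ 6 := by
    have h := minpoly.min ℚ β hPmon hPβ
    calc (minpoly ℚ β).natDegree ≤ P.natDegree := natDegree_le_natDegree h
      _ = 6 := hPdeg
  have hpos : 0 < (minpoly ℚ β).natDegree := minpoly.natDegree_pos hintβ
  have hne3 : (minpoly ℚ β).natDegree ≠ 3 := by
    intro h3
    have heq : ℚ⟮α⟯ = ℚ⟮β⟯ := eq_of_le_of_finrank_eq hle (by rw [hfinα, hfinβ, h3])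
    exact hnot (heq ▸ mem_adjoin_simple_self ℚ β)
  exact ⟨by omega, hnot⟩
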